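/- Pack correctness (invariant): Let Q be a rooted forest whose components' vertex sets partition a set P of roots such that each root w of P roots a binomial arborescence of height at most j in Q, and suppose the sum over w in P of 2^{height_Q(w)} is at least 2^j. Consider the process that repeatedly picks two roots x, y in the current root set with equal maximal height (in the current forest), adds an arc from x to y, and removes y from the root set, stopping when some root has height exactly j. Then this process terminates with a root v whose descendants form a binomial arborescence of height exactly j. -/

import Mathlib

universe u

variable {V : Type*} [DecidableEq V]

/-- A binomial arborescence over relation `A`, recorded with its vertex set,
its arc set, its root and its height. -/
inductive IsBAE (A : V → V → Prop) : Finset V → Finset (V × V) → V → ℕ → Prop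
  | single (a : V) : IsBAE A {a} ∅ a 0
  | join {s t : Finset V} {E F : Finset (V × V)} {a b : V} {i : ℕ} :
      IsBAE A s E a i → IsBAE A t F b i → Disjoint s t → A a b →
      IsBAE A (s ∪ t) (insert (a, b) (E ∪ F)) a (i + 1)

/-- Classical filter on a finset (no decidability assumptions needed). -/
noncomputable def cfilter {α : Type*} (p : α → Prop) (s : Finset α) : Finset α :=
  @Finset.filter _ p (fun _ => Classical.dec _) s

/-- The descendants (inside ambient vertex set `s`) of `x` in the digraph with arc set `E`:
vertices reachable from `x`, including `x` itself (when `x ∈ s`). -/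
noncomputable def desc (s : Finset V) (E : Finset (V × V)) (x : V) : Finset V :=
  cfilter (fun y => Relation.ReflTransGen (fun a b => (a, b) ∈ E) x y) s

/-- The height `α_H(x)` of a vertex: log base 2 of its number of descendants. -/
noncomputable def hgt (s : Finset V) (E : Finset (V × V)) (x : V) : ℕ :=
  Nat.log 2 (desc s E x).card

/-- The arcs of `E` lying within the subtree of descendants of `x`. -/
noncomputable def subArcs (s : Finset V) (E : Finset (V × V)) (x : V) : Finset (V × V) :=
  cfilter (fun e => e.1 ∈ desc s E x ∧ e.2 ∈ desc s E x) E

/-- One step of the `Pack` process, on states `(E, P)` consisting of the current arc set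
and the current set of roots: if no root yet has height `j`, pick two distinct roots
`x, y` of equal height, maximal among heights occurring at least twice, add the arc
`(x, y)` and remove `y` from the root set. -/
def PackStep (s : Finset V) (j : ℕ) (p q : Finset (V × V) × Finset V) : Prop :=
  (∀ r ∈ p.2, hgt s p.1 r ≠ j) ∧
  ∃ x ∈ p.2, ∃ y ∈ p.2, x ≠ y ∧ hgt s p.1 x = hgt s p.1 y ∧
    (∀ a ∈ p.2, ∀ b ∈ p.2, a ≠ b → hgt s p.1 a = hgt s p.1 b → hgt s p.1 a ≤ hgt s p.1 x) ∧
    q = (insert (x, y) p.1, p.2.erase y)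

/-! ### Auxiliary lemmas -/

lemma reach_insert_of_not {x y w : V} {E : Finset (V × V)}
    (h : ¬ Relation.ReflTransGen (fun a b => (a, b) ∈ E) w x) (z : V) :
    Relation.ReflTransGen (fun a b => (a, b) ∈ insert (x, y) E) w z ↔
      Relation.ReflTransGen (fun a b => (a, b) ∈ E) w z := by
  constructor
  · intro hz
    induction hz with
    | refl => exact .refl
    | @tail b c _ hbc ih =>
      rcases Finset.mem_insert.1 hbc with he | he
      · simp only [Prod.mk.injEq] at he
        obtain ⟨rfl, rfl⟩ := he
        exact absurd ih h
      · exact ih.tail he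
  · intro hz
    induction hz with
    | refl => exact .refl
    | tail _ hbc ih => exact ih.tail (Finset.mem_insert_of_mem hbc)

lemma reach_insert_self {x y : V} {E : Finset (V × V)} (z : V) :
    Relation.ReflTransGen (fun a b => (a, b) ∈ insert (x, y) E) x z ↔
      Relation.ReflTransGen (fun a b => (a, b) ∈ E) x z ∨
      Relation.ReflTransGen (fun a b => (a, b) ∈ E) y z := by
  constructor
  · intro hz
    induction hz with
    | refl => exact Or.inl .refl
    | @tail b c _ hbc ih =>
      rcases Finset.mem_insert.1 hbc with he | he
      · simp only [Prod.mk.injEq] at he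
        obtain ⟨rfl, rfl⟩ := he
        exact Or.inr Relation.ReflTransGen.refl
      · rcases ih with h | h
        · exact Or.inl (h.tail he)
        · exact Or.inr (h.tail he)
  · rintro (h | h)
    · exact Relation.ReflTransGen.mono (fun a b hab => Finset.mem_insert_of_mem hab) _ _ h
    · exact (Relation.ReflTransGen.single (Finset.mem_insert_self _ _)).trans
        (Relation.ReflTransGen.mono (fun a b hab => Finset.mem_insert_of_mem hab) _ _ h)

lemma mem_desc {s : Finset V} {E : Finset (V × V)} {x z : V} :
    z ∈ desc s E x ↔ z ∈ s ∧ Relation.ReflTransGen (fun a b => (a, b) ∈ E) x z := by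
  simp [desc, cfilter, Finset.mem_filter]

lemma desc_subset {s : Finset V} {E : Finset (V × V)} {x : V} : desc s E x ⊆ s :=
  fun _ h => (mem_desc.1 h).1

lemma mem_subArcs {s : Finset V} {E : Finset (V × V)} {x : V} {e : V × V} :
    e ∈ subArcs s E x ↔ e ∈ E ∧ e.1 ∈ desc s E x ∧ e.2 ∈ desc s E x := by
  simp [subArcs, cfilter, Finset.mem_filter]

lemma desc_insert_self {s : Finset V} {E : Finset (V × V)} {x y : V} :
    desc s (insert (x, y) E) x = desc s E x ∪ desc s E y := by
  ext z
  simp only [mem_desc, Finset.mem_union, reach_insert_self]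
  tauto

lemma not_reach_of_not_mem_desc {s : Finset V} {E : Finset (V × V)} {w x : V}
    (hxs : x ∈ s) (hx : x ∉ desc s E w) :
    ¬ Relation.ReflTransGen (fun a b => (a, b) ∈ E) w x :=
  fun h => hx (mem_desc.2 ⟨hxs, h⟩)

lemma desc_insert_other {s : Finset V} {E : Finset (V × V)} {w x y : V}
    (h : ¬ Relation.ReflTransGen (fun a b => (a, b) ∈ E) w x) :
    desc s (insert (x, y) E) w = desc s E w := by
  ext z
  simp only [mem_desc, reach_insert_of_not h]

lemma subArcs_insert_self {s : Finset V} {E : Finset (V × V)} {x y : V}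
    (hxs : x ∈ s) (hys : y ∈ s) (hd : Disjoint (desc s E x) (desc s E y)) :
    subArcs s (insert (x, y) E) x = insert (x, y) (subArcs s E x ∪ subArcs s E y) := by
  have hcross : ∀ a b : V, (a, b) ∈ E → a ∈ desc s E x → b ∈ desc s E y → False := by
    intro a b hab ha hb
    have : b ∈ desc s E x := mem_desc.2 ⟨(mem_desc.1 hb).1, (mem_desc.1 ha).2.tail hab⟩
    exact (Finset.disjoint_left.1 hd) this hb
  have hcross' : ∀ a b : V, (a, b) ∈ E → a ∈ desc s E y → b ∈ desc s E x → False := by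
    intro a b hab ha hb
    have : b ∈ desc s E y := mem_desc.2 ⟨(mem_desc.1 hb).1, (mem_desc.1 ha).2.tail hab⟩
    exact (Finset.disjoint_left.1 hd) hb this
  ext ⟨a, b⟩
  simp only [mem_subArcs, desc_insert_self, Finset.mem_insert, Finset.mem_union]
  constructor
  · rintro ⟨hab | hab, h1 | h1, h2 | h2⟩
    · exact Or.inl hab
    · exact Or.inl hab
    · exact Or.inl hab
    · exact Or.inl hab
    · exact Or.inr (Or.inl ⟨hab, h1, h2⟩)
    · exact absurd (hcross a b hab h1 h2) (fun h => h)
    · exact absurd (hcross' a b hab h1 h2) (fun h => h)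
    · exact Or.inr (Or.inr ⟨hab, h1, h2⟩)
  · rintro (hab | ⟨hab, h1, h2⟩ | ⟨hab, h1, h2⟩)
    · rw [Prod.ext_iff] at hab
      obtain ⟨rfl, rfl⟩ := hab
      exact ⟨Or.inl rfl, Or.inl (mem_desc.2 ⟨hxs, .refl⟩), Or.inr (mem_desc.2 ⟨hys, .refl⟩)⟩
    · exact ⟨Or.inr hab, Or.inl h1, Or.inl h2⟩
    · exact ⟨Or.inr hab, Or.inr h1, Or.inr h2⟩

lemma subArcs_insert_other {s : Finset V} {E : Finset (V × V)} {w x y : V}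
    (h : ¬ Relation.ReflTransGen (fun a b => (a, b) ∈ E) w x)
    (hx : x ∉ desc s E w) :
    subArcs s (insert (x, y) E) w = subArcs s E w := by
  ext ⟨a, b⟩
  simp only [mem_subArcs, desc_insert_other h, Finset.mem_insert]
  constructor
  · rintro ⟨hab | hab, h1, h2⟩
    · rw [Prod.ext_iff] at hab
      obtain ⟨rfl, rfl⟩ := hab
      exact absurd h1 hx
    · exact ⟨hab, h1, h2⟩
  · rintro ⟨hab, h1, h2⟩
    exact ⟨Or.inr hab, h1, h2⟩

lemma IsBAE.card_eq {A : V → V → Prop} {t : Finset V} {F : Finset (V × V)} {a : V} {i : ℕ}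
    (h : IsBAE A t F a i) : t.card = 2 ^ i := by
  induction h with
  | single => simp
  | join h1 h2 hd _ ih1 ih2 =>
    rw [Finset.card_union_of_disjoint hd, ih1, ih2]
    ring

lemma IsBAE.root_mem {A : V → V → Prop} {t : Finset V} {F : Finset (V × V)} {a : V} {i : ℕ}
    (h : IsBAE A t F a i) : a ∈ t := by
  induction h with
  | single => exact Finset.mem_singleton_self _
  | join _ _ _ _ ih1 _ => exact Finset.mem_union_left _ ih1

lemma sum_range_two_pow_lt (j : ℕ) : ∑ i ∈ Finset.range j, 2 ^ i < 2 ^ j := by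
  induction j with
  | zero => simp
  | succ n ih =>
    rw [Finset.sum_range_succ, pow_succ]
    omega

lemma pack_inv (s : Finset V) (j : ℕ) {p q : Finset (V × V) × Finset V}
    (hdisj : ∀ w ∈ p.2, ∀ w' ∈ p.2, w ≠ w' → Disjoint (desc s p.1 w) (desc s p.1 w'))
    (hBA : ∀ w ∈ p.2, ∃ i ≤ j, IsBAE (fun _ _ => True) (desc s p.1 w) (subArcs s p.1 w) w i)
    (hsum : 2 ^ j ≤ ∑ w ∈ p.2, 2 ^ hgt s p.1 w)
    (hstep : PackStep s j p q) :
    (∀ w ∈ q.2, ∀ w' ∈ q.2, w ≠ w' → Disjoint (desc s q.1 w) (desc s q.1 w')) ∧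
    (∀ w ∈ q.2, ∃ i ≤ j, IsBAE (fun _ _ => True) (desc s q.1 w) (subArcs s q.1 w) w i) ∧
    2 ^ j ≤ ∑ w ∈ q.2, 2 ^ hgt s q.1 w := by
  obtain ⟨hne, x, hx, y, hy, hxy, hheq, -, rfl⟩ := hstep
  obtain ⟨ix, hixj, hBx⟩ := hBA x hx
  obtain ⟨iy, hiyj, hBy⟩ := hBA y hy
  have hgtx : hgt s p.1 x = ix := by
    unfold hgt; rw [hBx.card_eq, Nat.log_pow one_lt_two]
  have hgty : hgt s p.1 y = iy := by
    unfold hgt; rw [hBy.card_eq, Nat.log_pow one_lt_two]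
  have hixy : iy = ix := by rw [← hgtx, ← hgty, hheq]
  subst hixy
  have hxmem : x ∈ desc s p.1 x := hBx.root_mem
  have hxs : x ∈ s := desc_subset hxmem
  have hys : y ∈ s := desc_subset hBy.root_mem
  have hDxy : Disjoint (desc s p.1 x) (desc s p.1 y) := hdisj x hx y hy hxy
  have hnr : ∀ w ∈ p.2, w ≠ x →
      ¬ Relation.ReflTransGen (fun a b => (a, b) ∈ p.1) w x := by
    intro w hw hwx
    exact not_reach_of_not_mem_desc hxs
      (Finset.disjoint_right.1 (hdisj w hw x hx hwx) hxmem)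
  have hdesc : ∀ w ∈ p.2, w ≠ x →
      desc s (insert (x, y) p.1) w = desc s p.1 w := by
    intro w hw hwx; exact desc_insert_other (hnr w hw hwx)
  have hsub : ∀ w ∈ p.2, w ≠ x →
      subArcs s (insert (x, y) p.1) w = subArcs s p.1 w := by
    intro w hw hwx
    exact subArcs_insert_other (hnr w hw hwx)
      (Finset.disjoint_right.1 (hdisj w hw x hx hwx) hxmem)
  have hdescx : desc s (insert (x, y) p.1) x = desc s p.1 x ∪ desc s p.1 y :=
    desc_insert_self
  have hsubx : subArcs s (insert (x, y) p.1) x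
      = insert (x, y) (subArcs s p.1 x ∪ subArcs s p.1 y) :=
    subArcs_insert_self hxs hys hDxy
  have hq1 : (insert (x, y) p.1, p.2.erase y).1 = insert (x, y) p.1 := rfl
  have hq2 : (insert (x, y) p.1, p.2.erase y).2 = p.2.erase y := rfl
  rw [hq1, hq2] at *
  refine ⟨?_, ?_, ?_⟩
  · -- disjointness
    intro w hw w' hw' hww'
    obtain ⟨hwy, hwP⟩ := Finset.mem_erase.1 hw
    obtain ⟨hw'y, hw'P⟩ := Finset.mem_erase.1 hw'
    by_cases hwx : w = x
    · subst hwx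
      rw [hdescx, hdesc w' hw'P (fun h => hww' h.symm)]
      exact Finset.disjoint_union_left.2
        ⟨hdisj w hwP w' hw'P hww', hdisj y hy w' hw'P (fun h => hw'y h.symm)⟩
    · by_cases hw'x : w' = x
      · subst hw'x
        rw [hdescx, hdesc w hwP hwx]
        exact Finset.disjoint_union_right.2
          ⟨hdisj w hwP w' hw'P hww', hdisj w hwP y hy hwy⟩
      · rw [hdesc w hwP hwx, hdesc w' hw'P hw'x]
        exact hdisj w hwP w' hw'P hww'
  · -- BAE
    intro w hw
    obtain ⟨hwy, hwP⟩ := Finset.mem_erase.1 hw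
    by_cases hwx : w = x
    · subst hwx
      refine ⟨iy + 1, ?_, ?_⟩
      · have := hne w hwP
        rw [hgtx] at this
        omega
      · rw [hdescx, hsubx]
        exact IsBAE.join hBx hBy hDxy trivial
    · obtain ⟨i, hij, hB⟩ := hBA w hwP
      exact ⟨i, hij, by rw [hdesc w hwP hwx, hsub w hwP hwx]; exact hB⟩
  · -- sum
    have hgtqx : hgt s (insert (x, y) p.1) x = iy + 1 := by
      unfold hgt
      rw [hdescx, Finset.card_union_of_disjoint hDxy, hBx.card_eq, hBy.card_eq,
        show (2:ℕ) ^ iy + 2 ^ iy = 2 ^ (iy + 1) by ring, Nat.log_pow one_lt_two]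
    have hxe : x ∈ p.2.erase y := Finset.mem_erase.2 ⟨hxy, hx⟩
    have e1 : ∑ w ∈ p.2, 2 ^ hgt s p.1 w
        = 2 ^ iy + (2 ^ iy + ∑ w ∈ (p.2.erase y).erase x, 2 ^ hgt s p.1 w) := by
      rw [← Finset.add_sum_erase p.2 _ hy, hgty,
        ← Finset.add_sum_erase (p.2.erase y) _ hxe, hgtx]
    have e2 : ∑ w ∈ p.2.erase y, 2 ^ hgt s (insert (x, y) p.1) w
        = 2 ^ iy + 2 ^ iy + ∑ w ∈ (p.2.erase y).erase x, 2 ^ hgt s p.1 w := by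
      rw [← Finset.add_sum_erase (p.2.erase y) _ hxe, hgtqx]
      have : ∑ w ∈ (p.2.erase y).erase x, 2 ^ hgt s (insert (x, y) p.1) w
          = ∑ w ∈ (p.2.erase y).erase x, 2 ^ hgt s p.1 w := by
        refine Finset.sum_congr rfl fun w hw => ?_
        obtain ⟨hwx, hw'⟩ := Finset.mem_erase.1 hw
        obtain ⟨hwy, hwP⟩ := Finset.mem_erase.1 hw'
        rw [hgt, hdesc w hwP hwx]; rfl
      rw [this]
      ring
    rw [e2]
    rw [e1] at hsum
    omega

theorem pack_correct (s : Finset V) (j : ℕ) (E0 : Finset (V × V)) (P : Finset V)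
    (hroot : ∀ w ∈ P, ∀ e ∈ E0, e.2 ≠ w)
    (hdisj : ∀ w ∈ P, ∀ w' ∈ P, w ≠ w' → Disjoint (desc s E0 w) (desc s E0 w'))
    (hBA : ∀ w ∈ P, ∃ i ≤ j, IsBAE (fun _ _ => True) (desc s E0 w) (subArcs s E0 w) w i)
    (hsum : 2 ^ j ≤ ∑ w ∈ P, 2 ^ hgt s E0 w) :
    ∀ Q : Finset (V × V) × Finset V, Relation.ReflTransGen (PackStep s j) (E0, P) Q →
      (∃ v ∈ Q.2, IsBAE (fun _ _ => True) (desc s Q.1 v) (subArcs s Q.1 v) v j) ∨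
      ∃ Q', PackStep s j Q Q' := by
  intro Q hQ
  have hInv : (∀ w ∈ Q.2, ∀ w' ∈ Q.2, w ≠ w' → Disjoint (desc s Q.1 w) (desc s Q.1 w')) ∧
      (∀ w ∈ Q.2, ∃ i ≤ j, IsBAE (fun _ _ => True) (desc s Q.1 w) (subArcs s Q.1 w) w i) ∧
      2 ^ j ≤ ∑ w ∈ Q.2, 2 ^ hgt s Q.1 w := by
    induction hQ with
    | refl => exact ⟨hdisj, hBA, hsum⟩
    | tail h1 h2 ih => exact pack_inv s j ih.1 ih.2.1 ih.2.2 h2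
  obtain ⟨hd, hb, hs⟩ := hInv
  by_cases hj : ∃ v ∈ Q.2, hgt s Q.1 v = j
  · obtain ⟨v, hv, hvj⟩ := hj
    left
    refine ⟨v, hv, ?_⟩
    obtain ⟨i, hij, hB⟩ := hb v hv
    have hhi : hgt s Q.1 v = i := by
      unfold hgt; rw [hB.card_eq, Nat.log_pow one_lt_two]
    have : i = j := by omega
    subst this
    exact hB
  · push_neg at hj
    right
    have hlt : ∀ w ∈ Q.2, hgt s Q.1 w < j := by
      intro w hw
      obtain ⟨i, hij, hB⟩ := hb w hw
      have hhi : hgt s Q.1 w = i := by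
        unfold hgt; rw [hB.card_eq, Nat.log_pow one_lt_two]
      have := hj w hw
      omega
    have hpair : ∃ a ∈ Q.2, ∃ b ∈ Q.2, a ≠ b ∧ hgt s Q.1 a = hgt s Q.1 b := by
      by_contra hc
      push_neg at hc
      have hinj : ∀ u ∈ Q.2, ∀ v ∈ Q.2, hgt s Q.1 u = hgt s Q.1 v → u = v := by
        intro u hu v hv he
        by_contra hne
        exact hc u hu v hv hne he
      have heq : ∑ w ∈ Q.2, 2 ^ hgt s Q.1 w
          = ∑ n ∈ Q.2.image (hgt s Q.1), 2 ^ n := (Finset.sum_image hinj).symm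
      have himg : Q.2.image (hgt s Q.1) ⊆ Finset.range j := by
        intro n hn
        obtain ⟨w, hw, rfl⟩ := Finset.mem_image.1 hn
        exact Finset.mem_range.2 (hlt w hw)
      have hle : ∑ n ∈ Q.2.image (hgt s Q.1), 2 ^ n ≤ ∑ n ∈ Finset.range j, 2 ^ n :=
        Finset.sum_le_sum_of_subset himg
      have := sum_range_two_pow_lt j
      omega
    obtain ⟨a, ha, b, hbm, hab, habh⟩ := hpair
    have hmemT : ∀ u : V,
        u ∈ cfilter (fun u => ∃ v ∈ Q.2, v ≠ u ∧ hgt s Q.1 v = hgt s Q.1 u) Q.2 ↔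
        u ∈ Q.2 ∧ ∃ v ∈ Q.2, v ≠ u ∧ hgt s Q.1 v = hgt s Q.1 u := by
      intro u
      simp [cfilter, Finset.mem_filter]
    have hTne : (cfilter (fun u => ∃ v ∈ Q.2, v ≠ u ∧ hgt s Q.1 v = hgt s Q.1 u) Q.2).Nonempty :=
      ⟨a, (hmemT a).2 ⟨ha, b, hbm, Ne.symm hab, habh.symm⟩⟩
    obtain ⟨x, hxT, hmax⟩ := Finset.exists_max_image _ (hgt s Q.1) hTne
    obtain ⟨hxQ, y, hyQ, hyx, hyh⟩ := (hmemT x).1 hxT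
    refine ⟨(insert (x, y) Q.1, Q.2.erase y), hj, x, hxQ, y, hyQ, Ne.symm hyx, hyh.symm,
      ?_, rfl⟩
    intro a' ha' b' hb' hne he
    exact hmax a' ((hmemT a').2 ⟨ha', b', hb', Ne.symm hne, he.symm⟩)
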